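/- For density matrices ρ_A of size d_A and ρ_B of size d_B with Bloch vectors α = (α_{ij}) and β = (β_{kl}) (α_{ij} = Tr(W_{ij}^† ρ_A), β_{kl} = Tr(W_{kl}^† ρ_B)), the correlation matrix of the product state ρ_A ⊗ ρ_B equals the rank-one matrix α·βᵗ, and its Ky Fan norm satisfies ‖α·βᵗ‖_KF = |α|·|β| ≤ √((d_A − 1)(d_B − 1)). -/

import Mathlib

open scoped Matrix ComplexOrder Kronecker
open Complex Finset

/-- The Weyl operator `W_{n m}` on a `d`-dimensional Hilbert space:
`(W_{n m})_{k, k'} = exp(2πi·k·n/d)` if `k' = k + m` (mod `d`), and `0` otherwise. -/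
noncomputable def Weyl (d : ℕ) (n m : ZMod d) : Matrix (ZMod d) (ZMod d) ℂ :=
  Matrix.of fun k k' =>
    if k' = k + m then Complex.exp (2 * Real.pi * Complex.I * (k.val * n.val : ℕ) / d) else 0

/-- The positive semidefinite square root of a positive semidefinite matrix
(the definition of `Matrix.PosSemidef.sqrt` in the older Mathlib, since removed). -/
noncomputable def Matrix.PosSemidef.sqrt {n 𝕜 : Type*} [Fintype n] [DecidableEq n] [RCLike 𝕜]
    {A : Matrix n n 𝕜} (hA : A.PosSemidef) : Matrix n n 𝕜 :=
  (hA.1.eigenvectorUnitary : Matrix n n 𝕜) *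
    Matrix.diagonal (((↑) : ℝ → 𝕜) ∘ Real.sqrt ∘ hA.1.eigenvalues) *
    (star hA.1.eigenvectorUnitary : Matrix n n 𝕜)

/-- The Ky Fan (trace) norm `‖M‖_KF = Tr √(M†M)`, the sum of the singular values of `M`. -/
noncomputable def kyFanNorm {m n : Type*} [Fintype m] [Fintype n] [DecidableEq n]
    (M : Matrix m n ℂ) : ℝ :=
  (Matrix.trace (Matrix.posSemidef_conjTranspose_mul_self M).sqrt).re

/-- The correlation matrix of a bipartite state relative to the Weyl basis:
`M_{(i,j),(k,l)} = Tr(ρ · (W_{ij}^† ⊗ W_{kl}^†))` for `(i,j) ≠ 0`, `(k,l) ≠ 0`. -/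
noncomputable def corrMatrix (dA dB : ℕ) [NeZero dA] [NeZero dB]
    (ρ : Matrix (ZMod dA × ZMod dB) (ZMod dA × ZMod dB) ℂ) :
    Matrix {p : ZMod dA × ZMod dA // p ≠ 0} {q : ZMod dB × ZMod dB // q ≠ 0} ℂ :=
  Matrix.of fun p q =>
    Matrix.trace (ρ * ((Weyl dA p.1.1 p.1.2)ᴴ ⊗ₖ (Weyl dB q.1.1 q.1.2)ᴴ))

open scoped MatrixOrder in
theorem Matrix.PosSemidef.eq_sqrt_of_sq_eq {n : Type*} [Fintype n] [DecidableEq n]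
    {B : Matrix n n ℂ} (hB : B.PosSemidef) (A : Matrix n n ℂ) {hA : A.PosSemidef}
    (h : B ^ 2 = A) : B = hA.sqrt := by
  have e : hA.sqrt = cfc Real.sqrt A := by
    rw [hA.1.cfc_eq, Matrix.IsHermitian.cfc, Matrix.PosSemidef.sqrt]
    simp [Unitary.conjStarAlgAut_apply]
  have e2 : CFC.sqrt A = cfc Real.sqrt A := by
    rw [CFC.sqrt_eq_cfc, cfc_nnreal_eq_real _ A]
    congr 1
    funext x; exact (Real.sqrt.eq_1 x).symm
  rw [e, ← e2]
  exact (CFC.sqrt_unique (by rw [← sq]; exact h) hB.nonneg).symm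

lemma zmod_sum_pow (d : ℕ) [NeZero d] (z : ℂ) :
    ∑ n : ZMod d, z ^ (n.val) = ∑ i ∈ Finset.range d, z ^ i := by
  refine Finset.sum_nbij' (fun n => n.val) (fun i => (i : ZMod d)) ?_ ?_ ?_ ?_ ?_
  · intro n _; exact Finset.mem_range.mpr (ZMod.val_lt n)
  · intro i _; exact Finset.mem_univ _
  · intro n _; simp [ZMod.natCast_val]
  · intro i hi; exact ZMod.val_cast_of_lt (Finset.mem_range.mp hi)
  · intro n _; rfl

lemma delta_sum (d : ℕ) [NeZero d] (j j' : ZMod d) :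
    ∑ n : ZMod d,
      (Complex.exp (2 * Real.pi * Complex.I * (((j.val : ℤ) - (j'.val : ℤ)) : ℂ) / d)) ^ n.val =
    if j = j' then (d : ℂ) else 0 := by
  have hpc : (((j.val : ℤ) : ℂ) - ((j'.val : ℤ) : ℂ)) = ((((j.val : ℤ) - (j'.val : ℤ)) : ℤ) : ℂ) := by
    push_cast; ring
  set c : ℤ := (j.val : ℤ) - (j'.val : ℤ) with hc
  rw [hpc, zmod_sum_pow]
  set z : ℂ := Complex.exp (2 * Real.pi * Complex.I * (c : ℂ) / d) with hz
  have hd : (d : ℂ) ≠ 0 := Nat.cast_ne_zero.mpr (NeZero.ne d)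
  have hjv := ZMod.val_lt j
  have hjv' := ZMod.val_lt j'
  by_cases h : j = j'
  · have hc0 : c = 0 := by simp [hc, h]
    simp [hz, hc0, h]
  · have h2 : (2 * (Real.pi : ℂ) * Complex.I) ≠ 0 := by
      simp [Real.pi_ne_zero, Complex.I_ne_zero, Complex.ofReal_ne_zero]
    have hzne : z ≠ 1 := by
      intro hz1
      rw [hz, Complex.exp_eq_one_iff] at hz1
      obtain ⟨k, hk⟩ := hz1
      have hcd : (2 * (Real.pi:ℂ) * Complex.I) * (c : ℂ) =
          (2 * (Real.pi:ℂ) * Complex.I) * ((k : ℂ) * d) := by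
        field_simp at hk
        linear_combination (2 * (Real.pi:ℂ) * Complex.I) * hk
      have hcd2 : (c : ℂ) = ((k * d : ℤ) : ℂ) := by
        push_cast
        exact mul_left_cancel₀ h2 hcd
      have hcz : c = k * d := by exact_mod_cast hcd2
      have hvne : j.val ≠ j'.val := fun hv => h (ZMod.val_injective d hv)
      have hd0 : (0:ℤ) < d := by exact_mod_cast Nat.pos_of_ne_zero (NeZero.ne d)
      have hb1 : -(d:ℤ) < k * d := by omega
      have hb2 : k * (d:ℤ) < d := by omega
      have hk0 : k = 0 := by
        rcases lt_trichotomy k 0 with hk | hk | hk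
        · nlinarith [mul_nonneg (by omega : (0:ℤ) ≤ -k-1) (le_of_lt hd0)]
        · exact hk
        · nlinarith [mul_nonneg (by omega : (0:ℤ) ≤ k-1) (le_of_lt hd0)]
      rw [hk0, zero_mul] at hcz
      omega
    rw [geom_sum_eq hzne]
    have hzd : z ^ d = 1 := by
      rw [hz, ← Complex.exp_nat_mul]
      have : (d : ℂ) * (2 * Real.pi * Complex.I * (c:ℂ) / d) = (c : ℂ) * (2 * Real.pi * Complex.I) := by
        field_simp
      rw [this, Complex.exp_int_mul_two_pi_mul_I]
    rw [hzd]
    simp [h]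

lemma exp_delta (d : ℕ) [NeZero d] (j j' : ZMod d) (n : ZMod d) :
    Complex.exp (2 * Real.pi * Complex.I * ((j.val * n.val : ℕ) : ℂ) / d) *
      (starRingEnd ℂ) (Complex.exp (2 * Real.pi * Complex.I * ((j'.val * n.val : ℕ) : ℂ) / d)) =
    (Complex.exp (2 * Real.pi * Complex.I * (((j.val : ℤ) - (j'.val : ℤ)) : ℂ) / d)) ^ n.val := by
  rw [← Complex.exp_conj, ← Complex.exp_add, ← Complex.exp_nat_mul]
  congr 1
  have hd : (d : ℂ) ≠ 0 := Nat.cast_ne_zero.mpr (NeZero.ne d)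
  simp only [map_div₀, map_mul, Complex.conj_I, map_ofNat, Complex.conj_natCast,
    Complex.conj_ofReal]
  field_simp
  push_cast
  ring

lemma trace_weyl_mul (d : ℕ) [NeZero d] (n m : ZMod d) (ρ : Matrix (ZMod d) (ZMod d) ℂ) :
    Matrix.trace ((Weyl d n m)ᴴ * ρ) =
    ∑ j : ZMod d, (starRingEnd ℂ)
        (Complex.exp (2 * Real.pi * Complex.I * ((j.val * n.val : ℕ) : ℂ) / d)) * ρ j (j + m) := by
  simp only [Matrix.trace, Matrix.diag, Matrix.mul_apply, Matrix.conjTranspose_apply, Weyl,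
    Matrix.of_apply]
  rw [Finset.sum_comm]
  refine Finset.sum_congr rfl fun j _ => ?_
  simp [apply_ite (starRingEnd ℂ), ite_mul]

lemma weyl_zero_zero (d : ℕ) [NeZero d] : Weyl d 0 0 = 1 := by
  ext k k'
  simp [Weyl, Matrix.one_apply, eq_comm]

lemma parseval (d : ℕ) [NeZero d] (ρ : Matrix (ZMod d) (ZMod d) ℂ) :
    ∑ p : ZMod d × ZMod d,
      (starRingEnd ℂ) (Matrix.trace ((Weyl d p.1 p.2)ᴴ * ρ)) * Matrix.trace ((Weyl d p.1 p.2)ᴴ * ρ)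
    = (d : ℂ) * ∑ j : ZMod d, ∑ k : ZMod d, (starRingEnd ℂ) (ρ j k) * ρ j k := by
  have inner : ∀ (m j j' : ZMod d),
      ∑ n : ZMod d,
        (Complex.exp (2 * Real.pi * Complex.I * ((j.val * n.val : ℕ) : ℂ) / d) *
            (starRingEnd ℂ) (ρ j (j + m))) *
          ((starRingEnd ℂ)
              (Complex.exp (2 * Real.pi * Complex.I * ((j'.val * n.val : ℕ) : ℂ) / d)) *
            ρ j' (j' + m)) =
      (if j = j' then (d : ℂ) else 0) * ((starRingEnd ℂ) (ρ j (j + m)) * ρ j' (j' + m)) := by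
    intro m j j'
    rw [← delta_sum d j j', Finset.sum_mul]
    refine Finset.sum_congr rfl fun n _ => ?_
    rw [← exp_delta d j j' n]
    ring
  have key : ∀ m : ZMod d,
      ∑ n : ZMod d,
        (starRingEnd ℂ) (Matrix.trace ((Weyl d n m)ᴴ * ρ)) * Matrix.trace ((Weyl d n m)ᴴ * ρ)
      = (d : ℂ) * ∑ j : ZMod d, (starRingEnd ℂ) (ρ j (j + m)) * ρ j (j + m) := by
    intro m
    simp only [trace_weyl_mul, map_sum, map_mul, Complex.conj_conj, Finset.sum_mul_sum]
    rw [Finset.sum_comm]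
    calc ∑ j : ZMod d, ∑ n : ZMod d, ∑ j' : ZMod d,
          (Complex.exp (2 * Real.pi * Complex.I * ((j.val * n.val : ℕ) : ℂ) / d) *
              (starRingEnd ℂ) (ρ j (j + m))) *
            ((starRingEnd ℂ)
                (Complex.exp (2 * Real.pi * Complex.I * ((j'.val * n.val : ℕ) : ℂ) / d)) *
              ρ j' (j' + m))
        = ∑ j : ZMod d, ∑ j' : ZMod d,
            (if j = j' then (d : ℂ) else 0) * ((starRingEnd ℂ) (ρ j (j + m)) * ρ j' (j' + m)) := by
          refine Finset.sum_congr rfl fun j _ => ?_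
          rw [Finset.sum_comm]
          exact Finset.sum_congr rfl fun j' _ => inner m j j'
      _ = ∑ j : ZMod d, (d : ℂ) * ((starRingEnd ℂ) (ρ j (j + m)) * ρ j (j + m)) := by
          refine Finset.sum_congr rfl fun j _ => ?_
          simp [ite_mul, Finset.sum_ite_eq]
      _ = (d : ℂ) * ∑ j : ZMod d, (starRingEnd ℂ) (ρ j (j + m)) * ρ j (j + m) := by
          rw [Finset.mul_sum]
  calc ∑ p : ZMod d × ZMod d,
        (starRingEnd ℂ) (Matrix.trace ((Weyl d p.1 p.2)ᴴ * ρ)) *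
          Matrix.trace ((Weyl d p.1 p.2)ᴴ * ρ)
      = ∑ m : ZMod d, ∑ n : ZMod d,
          (starRingEnd ℂ) (Matrix.trace ((Weyl d n m)ᴴ * ρ)) *
            Matrix.trace ((Weyl d n m)ᴴ * ρ) := by
        rw [Fintype.sum_prod_type, Finset.sum_comm]
    _ = ∑ m : ZMod d, (d : ℂ) * ∑ j : ZMod d, (starRingEnd ℂ) (ρ j (j + m)) * ρ j (j + m) := by
        exact Finset.sum_congr rfl fun m _ => key m
    _ = (d : ℂ) * ∑ j : ZMod d, ∑ k : ZMod d, (starRingEnd ℂ) (ρ j k) * ρ j k := by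
        rw [← Finset.mul_sum, Finset.sum_comm]
        congr 1
        refine Finset.sum_congr rfl fun j _ => ?_
        exact Equiv.sum_comp (Equiv.addLeft j) (fun k => (starRingEnd ℂ) (ρ j k) * ρ j k)

lemma purity (d : ℕ) [NeZero d] (ρ : Matrix (ZMod d) (ZMod d) ℂ)
    (hpsd : ρ.PosSemidef) (htr : ρ.trace = 1) :
    ∃ r : ℝ, 0 ≤ r ∧ r ≤ 1 ∧
      (∑ j : ZMod d, ∑ k : ZMod d, (starRingEnd ℂ) (ρ j k) * ρ j k) = (r : ℂ) := by
  have hH : ρ.IsHermitian := hpsd.1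
  set U : Matrix (ZMod d) (ZMod d) ℂ := (hH.eigenvectorUnitary : Matrix (ZMod d) (ZMod d) ℂ)
  set D : Matrix (ZMod d) (ZMod d) ℂ :=
    Matrix.diagonal (RCLike.ofReal ∘ hH.eigenvalues) with hD
  have hspec : ρ = U * D * star U := hH.spectral_theorem
  have h1 : star U * U = 1 := by
    exact ((Unitary.mem_iff).mp hH.eigenvectorUnitary.2).1
  have hsum : ∑ j : ZMod d, ∑ k : ZMod d, (starRingEnd ℂ) (ρ j k) * ρ j k
      = Matrix.trace (ρ * ρ) := by
    have hconj : ∀ j k, (starRingEnd ℂ) (ρ j k) = ρ k j := by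
      intro j k
      exact (congrFun (congrFun hH k) j)
    simp only [Matrix.trace, Matrix.diag, Matrix.mul_apply]
    rw [Finset.sum_comm]
    exact Finset.sum_congr rfl fun j _ => Finset.sum_congr rfl fun k _ => by rw [hconj]
  have hρρ : ρ * ρ = U * (D * D) * star U := by
    rw [hspec]
    calc U * D * star U * (U * D * star U) = U * D * (star U * U) * D * star U := by
          simp only [mul_assoc]
      _ = U * (D * D) * star U := by rw [h1]; simp only [mul_assoc, one_mul]
  have htr2 : Matrix.trace (ρ * ρ) = ∑ i : ZMod d, ((hH.eigenvalues i : ℂ)) ^ 2 := by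
    rw [hρρ, Matrix.trace_mul_cycle, ← mul_assoc, h1, one_mul, hD,
      Matrix.diagonal_mul_diagonal, Matrix.trace_diagonal]
    simp [sq]
  have htrρ : Matrix.trace ρ = ∑ i : ZMod d, ((hH.eigenvalues i : ℂ)) := by
    conv_lhs => rw [hspec]
    rw [Matrix.trace_mul_cycle, h1, one_mul, hD, Matrix.trace_diagonal]
    simp
  have hsum1 : ∑ i : ZMod d, hH.eigenvalues i = 1 := by
    have : ((∑ i : ZMod d, hH.eigenvalues i : ℝ) : ℂ) = 1 := by
      push_cast
      rw [← htrρ, htr]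
    exact_mod_cast this
  have hnn : ∀ i, 0 ≤ hH.eigenvalues i := fun i => hpsd.eigenvalues_nonneg i
  have hle1 : ∀ i, hH.eigenvalues i ≤ 1 := by
    intro i
    rw [← hsum1]
    exact Finset.single_le_sum (fun j _ => hnn j) (Finset.mem_univ i)
  refine ⟨∑ i : ZMod d, (hH.eigenvalues i) ^ 2, Finset.sum_nonneg fun i _ => sq_nonneg _, ?_, ?_⟩
  · calc ∑ i : ZMod d, (hH.eigenvalues i) ^ 2 ≤ ∑ i : ZMod d, hH.eigenvalues i :=
        Finset.sum_le_sum fun i _ => by nlinarith [hnn i, hle1 i]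
      _ = 1 := hsum1
  · rw [hsum, htr2]
    push_cast
    rfl

lemma bloch_bound (d : ℕ) [NeZero d] (ρ : Matrix (ZMod d) (ZMod d) ℂ)
    (hpsd : ρ.PosSemidef) (htr : ρ.trace = 1) :
    ∑ p : {p : ZMod d × ZMod d // p ≠ 0}, ‖Matrix.trace ((Weyl d p.1.1 p.1.2)ᴴ * ρ)‖ ^ 2
      ≤ (d : ℝ) - 1 := by
  obtain ⟨r, hr0, hr1, hr⟩ := purity d ρ hpsd htr
  set f : ZMod d × ZMod d → ℝ := fun p => ‖Matrix.trace ((Weyl d p.1 p.2)ᴴ * ρ)‖ ^ 2 with hf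
  have h0 : f 0 = 1 := by
    have : (0 : ZMod d × ZMod d) = (0, 0) := rfl
    rw [hf]
    simp only [this, weyl_zero_zero, Matrix.conjTranspose_one, one_mul, htr]
    norm_num
  have hfull : ∑ p : ZMod d × ZMod d, f p = (d : ℝ) * r := by
    have hcast : ((∑ p : ZMod d × ZMod d, f p : ℝ) : ℂ) = ((d : ℝ) * r : ℝ) := by
      push_cast
      rw [← hr, ← parseval d ρ]
      refine Finset.sum_congr rfl fun p _ => ?_
      rw [RCLike.conj_mul]
      norm_cast
    exact_mod_cast hcast
  have hsub : ∑ p : {p : ZMod d × ZMod d // p ≠ 0}, f p.1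
      = ∑ p ∈ Finset.univ.erase (0 : ZMod d × ZMod d), f p := by
    rw [← Finset.sum_subtype (Finset.univ.erase (0 : ZMod d × ZMod d)) (fun x => by simp) f]
  have herase : ∑ p ∈ Finset.univ.erase (0 : ZMod d × ZMod d), f p + f 0
      = ∑ p : ZMod d × ZMod d, f p :=
    Finset.sum_erase_add _ _ (Finset.mem_univ _)
  have hd1 : (1 : ℝ) ≤ d := by
    have := Nat.pos_of_ne_zero (NeZero.ne d)
    exact_mod_cast this
  have : ∑ p : {p : ZMod d × ZMod d // p ≠ 0}, f p.1 = (d : ℝ) * r - 1 := by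
    rw [hsub]
    have := herase
    rw [h0, hfull] at this
    linarith
  rw [hf] at this
  rw [this]
  nlinarith [hr1, hr0, hd1]

lemma kyFan_rank_one {P Q : Type*} [Fintype P] [Fintype Q] [DecidableEq Q]
    (a : P → ℂ) (b : Q → ℂ) :
    kyFanNorm (Matrix.of fun p q => a p * b q) =
      Real.sqrt (∑ p, ‖a p‖ ^ 2) * Real.sqrt (∑ q, ‖b q‖ ^ 2) := by
  classical
  set M : Matrix P Q ℂ := Matrix.of fun p q => a p * b q with hM
  set c : ℝ := ∑ p, ‖a p‖ ^ 2 with hc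
  set t : ℝ := ∑ q, ‖b q‖ ^ 2 with ht
  have hc0 : 0 ≤ c := Finset.sum_nonneg fun _ _ => sq_nonneg _
  have ht0 : 0 ≤ t := Finset.sum_nonneg fun _ _ => sq_nonneg _
  have hsum_a : ∑ p, (starRingEnd ℂ) (a p) * a p = (c : ℂ) := by
    rw [hc]; push_cast
    exact Finset.sum_congr rfl fun p _ => by rw [RCLike.conj_mul]; norm_cast
  have hsum_b : ∑ q, (starRingEnd ℂ) (b q) * b q = (t : ℂ) := by
    rw [ht]; push_cast
    exact Finset.sum_congr rfl fun q _ => by rw [RCLike.conj_mul]; norm_cast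
  have hMM : Mᴴ * M = Matrix.of fun q q' => (c : ℂ) * ((starRingEnd ℂ) (b q) * b q') := by
    ext q q'
    simp only [Matrix.mul_apply, Matrix.conjTranspose_apply, hM, Matrix.of_apply]
    calc ∑ p, star (a p * b q) * (a p * b q')
        = ∑ p, ((starRingEnd ℂ) (a p) * a p) * ((starRingEnd ℂ) (b q) * b q') := by
          refine Finset.sum_congr rfl fun p _ => ?_
          show (starRingEnd ℂ) (a p * b q) * (a p * b q') = _
          rw [map_mul]; ring
      _ = (c : ℂ) * ((starRingEnd ℂ) (b q) * b q') := by rw [← Finset.sum_mul, hsum_a]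
  by_cases hz : c = 0 ∨ t = 0
  · have hM0 : M = 0 := by
      ext p q
      rcases hz with h | h
      · have h2 : ‖a p‖ ^ 2 = 0 :=
          (Finset.sum_eq_zero_iff_of_nonneg (fun i _ => sq_nonneg ‖a i‖)).mp
            (by rw [← hc]; exact h) p (Finset.mem_univ p)
        have ha : a p = 0 := by
          have h3 : ‖a p‖ = 0 := by
            have := sq_eq_zero_iff.mp h2
            exact this
          exact norm_eq_zero.mp h3
        simp [hM, ha]
      · have h2 : ‖b q‖ ^ 2 = 0 :=
          (Finset.sum_eq_zero_iff_of_nonneg (fun i _ => sq_nonneg ‖b i‖)).mp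
            (by rw [← ht]; exact h) q (Finset.mem_univ q)
        have hb : b q = 0 := by
          have h3 : ‖b q‖ = 0 := sq_eq_zero_iff.mp h2
          exact norm_eq_zero.mp h3
        simp [hM, hb]
    have hsqrt : (0 : Matrix Q Q ℂ) = (Matrix.posSemidef_conjTranspose_mul_self M).sqrt := by
      refine Matrix.PosSemidef.eq_sqrt_of_sq_eq ?_ _ ?_
      · exact Matrix.PosSemidef.zero
      · rw [hM0]; simp
    rw [kyFanNorm, ← hsqrt]
    rcases hz with h | h <;> simp [h]
  · push_neg at hz
    have hcpos : 0 < c := lt_of_le_of_ne hc0 (Ne.symm hz.1)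
    have htpos : 0 < t := lt_of_le_of_ne ht0 (Ne.symm hz.2)
    have hctpos : 0 < c * t := mul_pos hcpos htpos
    set k : ℝ := c / Real.sqrt (c * t) with hk
    have hkpos : 0 < k := div_pos hcpos (Real.sqrt_pos.mpr hctpos)
    set S : Matrix Q Q ℂ :=
      Matrix.of fun q q' => (k : ℂ) * ((starRingEnd ℂ) (b q) * b q') with hS
    set R : Matrix Unit Q ℂ := Matrix.of fun _ q => ((Real.sqrt k : ℝ) : ℂ) * b q with hR
    have h2 : (((Real.sqrt k : ℝ) : ℂ)) * (((Real.sqrt k : ℝ) : ℂ)) = (k : ℂ) := by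
      rw [← Complex.ofReal_mul, Real.mul_self_sqrt hkpos.le]
    have hSR : S = Rᴴ * R := by
      ext q q'
      simp only [Matrix.mul_apply, Matrix.conjTranspose_apply, hS, hR, Matrix.of_apply,
        Finset.univ_unique, Finset.sum_singleton, Complex.star_def, map_mul,
        Complex.conj_ofReal]
      rw [← h2]
      ring
    have hSpsd : S.PosSemidef := hSR ▸ Matrix.posSemidef_conjTranspose_mul_self R
    have hS2 : S ^ 2 = Mᴴ * M := by
      rw [sq, hMM]
      ext q q'
      simp only [Matrix.mul_apply, hS, Matrix.of_apply]
      calc ∑ r, (k : ℂ) * ((starRingEnd ℂ) (b q) * b r) * ((k : ℂ) * ((starRingEnd ℂ) (b r) * b q'))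
          = ((k : ℂ) * (k : ℂ)) * ((starRingEnd ℂ) (b q) * b q') * ∑ r, (starRingEnd ℂ) (b r) * b r := by
            rw [Finset.mul_sum]
            refine Finset.sum_congr rfl fun r _ => ?_
            ring
        _ = (c : ℂ) * ((starRingEnd ℂ) (b q) * b q') := by
            rw [hsum_b]
            have hreal : k * k * t = c := by
              rw [hk]
              rw [div_mul_div_comm, div_mul_eq_mul_div, Real.mul_self_sqrt hctpos.le]
              field_simp
            push_cast [← hreal]
            ring
    have hsqrt : S = (Matrix.posSemidef_conjTranspose_mul_self M).sqrt :=
      Matrix.PosSemidef.eq_sqrt_of_sq_eq hSpsd _ hS2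
    rw [kyFanNorm, ← hsqrt]
    have htrS : Matrix.trace S = ((k * t : ℝ) : ℂ) := by
      simp only [Matrix.trace, Matrix.diag, hS, Matrix.of_apply]
      rw [← Finset.mul_sum, hsum_b]
      push_cast
      ring
    rw [htrS, Complex.ofReal_re, hk, div_mul_eq_mul_div, Real.div_sqrt]
    exact Real.sqrt_mul hc0 t

set_option maxHeartbeats 1000000 in
/-- the correlation matrix of a product state `ρ_A ⊗ ρ_B` is the rank-one
matrix `α βᵗ` built from the Bloch vectors, and its Ky Fan norm equals `|α|·|β|`, which
is at most `√((d_A − 1)(d_B − 1))`. -/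
theorem corr_of_product_state (dA dB : ℕ) [NeZero dA] [NeZero dB]
    (hA : 2 ≤ dA) (hB : 2 ≤ dB)
    (ρA : Matrix (ZMod dA) (ZMod dA) ℂ) (hApsd : ρA.PosSemidef) (hAtr : ρA.trace = 1)
    (ρB : Matrix (ZMod dB) (ZMod dB) ℂ) (hBpsd : ρB.PosSemidef) (hBtr : ρB.trace = 1) :
    corrMatrix dA dB (ρA ⊗ₖ ρB) =
      Matrix.of (fun (p : {p : ZMod dA × ZMod dA // p ≠ 0}) (q : {q : ZMod dB × ZMod dB // q ≠ 0}) =>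
        Matrix.trace ((Weyl dA p.1.1 p.1.2)ᴴ * ρA) * Matrix.trace ((Weyl dB q.1.1 q.1.2)ᴴ * ρB)) ∧
    kyFanNorm (corrMatrix dA dB (ρA ⊗ₖ ρB)) =
      Real.sqrt (∑ p : {p : ZMod dA × ZMod dA // p ≠ 0},
          ‖Matrix.trace ((Weyl dA p.1.1 p.1.2)ᴴ * ρA)‖ ^ 2) *
        Real.sqrt (∑ q : {q : ZMod dB × ZMod dB // q ≠ 0},
          ‖Matrix.trace ((Weyl dB q.1.1 q.1.2)ᴴ * ρB)‖ ^ 2) ∧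
    kyFanNorm (corrMatrix dA dB (ρA ⊗ₖ ρB)) ≤ Real.sqrt (((dA : ℝ) - 1) * ((dB : ℝ) - 1)) := by
  have part1 : corrMatrix dA dB (ρA ⊗ₖ ρB) =
      Matrix.of (fun (p : {p : ZMod dA × ZMod dA // p ≠ 0}) (q : {q : ZMod dB × ZMod dB // q ≠ 0}) =>
        Matrix.trace ((Weyl dA p.1.1 p.1.2)ᴴ * ρA) * Matrix.trace ((Weyl dB q.1.1 q.1.2)ᴴ * ρB)) := by
    ext p q
    simp only [corrMatrix, Matrix.of_apply]
    rw [← Matrix.mul_kronecker_mul, Matrix.trace_kronecker,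
      Matrix.trace_mul_comm ρA, Matrix.trace_mul_comm ρB]
  have part2 : kyFanNorm (corrMatrix dA dB (ρA ⊗ₖ ρB)) =
      Real.sqrt (∑ p : {p : ZMod dA × ZMod dA // p ≠ 0},
          ‖Matrix.trace ((Weyl dA p.1.1 p.1.2)ᴴ * ρA)‖ ^ 2) *
        Real.sqrt (∑ q : {q : ZMod dB × ZMod dB // q ≠ 0},
          ‖Matrix.trace ((Weyl dB q.1.1 q.1.2)ᴴ * ρB)‖ ^ 2) := by
    rw [part1]
    exact kyFan_rank_one
      (fun (p : {p : ZMod dA × ZMod dA // p ≠ 0}) => Matrix.trace ((Weyl dA p.1.1 p.1.2)ᴴ * ρA))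
      (fun (q : {q : ZMod dB × ZMod dB // q ≠ 0}) => Matrix.trace ((Weyl dB q.1.1 q.1.2)ᴴ * ρB))
  refine ⟨part1, part2, ?_⟩
  rw [part2]
  have hAb := bloch_bound dA ρA hApsd hAtr
  have hBb := bloch_bound dB ρB hBpsd hBtr
  have hA1 : (0:ℝ) ≤ (dA : ℝ) - 1 := by
    have : (2:ℝ) ≤ dA := by exact_mod_cast hA
    linarith
  calc Real.sqrt (∑ p : {p : ZMod dA × ZMod dA // p ≠ 0},
          ‖Matrix.trace ((Weyl dA p.1.1 p.1.2)ᴴ * ρA)‖ ^ 2) *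
        Real.sqrt (∑ q : {q : ZMod dB × ZMod dB // q ≠ 0},
          ‖Matrix.trace ((Weyl dB q.1.1 q.1.2)ᴴ * ρB)‖ ^ 2)
      ≤ Real.sqrt ((dA : ℝ) - 1) * Real.sqrt ((dB : ℝ) - 1) := by
        apply mul_le_mul (Real.sqrt_le_sqrt hAb) (Real.sqrt_le_sqrt hBb)
          (Real.sqrt_nonneg _) (Real.sqrt_nonneg _)
    _ = Real.sqrt (((dA : ℝ) - 1) * ((dB : ℝ) - 1)) := (Real.sqrt_mul hA1 _).symm
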